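/- arXiv:1005.3228 — 5 statements merged into one kernel-verified Lean document; each statement's English description precedes it below -/
import Mathlib

section
/- For every real number α ≥ 1 and every integer m ≥ 1, one has 2·∫_0^1 ( log(α²/ρ²) )^m · e^{−ρ²} · ρ dρ ≤ α² · m!. -/
open MeasureTheory

/-- For every real number α ≥ 1 and every integer m ≥ 1, one has
`2·∫_0^1 (log(α²/ρ²))^m · e^{−ρ²} · ρ dρ ≤ α² · m!`, the integral being the Lebesgue
integral over ρ ∈ (0,1]. -/
theorem log_moment_integral_le_inner (α : ℝ) (hα : 1 ≤ α) (m : ℕ) (hm : 1 ≤ m) :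
    2 * ∫ ρ in Set.Ioc (0 : ℝ) 1,
        (Real.log (α ^ 2 / ρ ^ 2)) ^ m * Real.exp (-ρ ^ 2) * ρ
      ≤ α ^ 2 * m.factorial := by
  have hα0 : (0:ℝ) < α := lt_of_lt_of_le one_pos hα
  have hα2 : (0:ℝ) < α ^ 2 := by positivity
  set L := Real.log (α ^ 2) with hLdef
  have hL0 : 0 ≤ L := Real.log_nonneg (by nlinarith)
  set g : ℝ → ℝ := fun t => (Real.log (α ^ 2 / t)) ^ m * Real.exp (-t) with hg
  -- Step 1: first change of variables t = ρ²
  have hsq_img : (fun ρ : ℝ => ρ ^ 2) '' Set.Ioc 0 1 = Set.Ioc 0 1 := by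
    ext t
    constructor
    · rintro ⟨ρ, ⟨h0, h1⟩, rfl⟩
      refine ⟨by positivity, ?_⟩
      show ρ ^ 2 ≤ 1
      nlinarith
    · rintro ⟨h0, h1⟩
      refine ⟨Real.sqrt t, ⟨Real.sqrt_pos.2 h0, ?_⟩, Real.sq_sqrt h0.le⟩
      rw [show (1:ℝ) = Real.sqrt 1 from Real.sqrt_one.symm]
      exact Real.sqrt_le_sqrt h1
  have hsq_inj : Set.InjOn (fun ρ : ℝ => ρ ^ 2) (Set.Ioc 0 1) := by
    intro a ha b hb h
    simp only at h
    nlinarith [ha.1, hb.1, sq_nonneg (a - b), sq_nonneg (a + b)]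
  have step1 : ∫ t in Set.Ioc (0:ℝ) 1, g t
      = 2 * ∫ ρ in Set.Ioc (0:ℝ) 1,
          (Real.log (α ^ 2 / ρ ^ 2)) ^ m * Real.exp (-ρ ^ 2) * ρ := by
    have key : ∫ t in (fun ρ : ℝ => ρ ^ 2) '' Set.Ioc 0 1, g t
        = ∫ ρ in Set.Ioc (0:ℝ) 1, |2 * ρ| • g (ρ ^ 2) :=
      integral_image_eq_integral_abs_deriv_smul measurableSet_Ioc
        (fun x _ => ((by simpa using hasDerivAt_pow 2 x : HasDerivAt (fun ρ : ℝ => ρ ^ 2)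
          (2 * x) x)).hasDerivWithinAt) hsq_inj g
    rw [hsq_img] at key
    rw [key, ← MeasureTheory.integral_const_mul (2:ℝ)
      (fun ρ : ℝ => (Real.log (α ^ 2 / ρ ^ 2)) ^ m * Real.exp (-ρ ^ 2) * ρ)]
    refine setIntegral_congr_fun measurableSet_Ioc fun x hx => ?_
    have hx0 : 0 < x := hx.1
    have : |2 * x| = 2 * x := abs_of_pos (by linarith)
    simp only [smul_eq_mul, this, hg]
    ring
  -- Step 2: second change of variables t = α² e^{-u}
  have hexp_img : (fun u : ℝ => α ^ 2 * Real.exp (-u)) '' Set.Ici L = Set.Ioc 0 1 := by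
    ext t
    constructor
    · rintro ⟨u, hu, rfl⟩
      refine ⟨by positivity, ?_⟩
      have h1 : Real.exp (-u) ≤ Real.exp (-L) := Real.exp_le_exp.2 (by simpa using hu)
      have h2 : Real.exp (-L) = (α ^ 2)⁻¹ := by
        rw [Real.exp_neg, Real.exp_log hα2]
      calc α ^ 2 * Real.exp (-u) ≤ α ^ 2 * (α ^ 2)⁻¹ := by
            rw [← h2]; exact mul_le_mul_of_nonneg_left h1 hα2.le
        _ = 1 := mul_inv_cancel₀ hα2.ne'
    · rintro ⟨h0, h1⟩
      refine ⟨Real.log (α ^ 2 / t), ?_, ?_⟩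
      · rw [Set.mem_Ici, hLdef]
        rw [Real.log_div hα2.ne' h0.ne']
        have := Real.log_nonpos h0.le h1
        linarith
      · show α ^ 2 * Real.exp (-Real.log (α ^ 2 / t)) = t
        rw [Real.exp_neg, Real.exp_log (by positivity)]
        field_simp
  have hexp_inj : Set.InjOn (fun u : ℝ => α ^ 2 * Real.exp (-u)) (Set.Ici L) := by
    intro a _ b _ h
    simp only at h
    have := mul_left_cancel₀ hα2.ne' h
    exact neg_injective (Real.exp_injective this)
  have hderiv : ∀ u ∈ Set.Ici L,
      HasDerivAt (fun u : ℝ => α ^ 2 * Real.exp (-u)) (α ^ 2 * (Real.exp (-u) * -1)) u := by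
    intro u _
    exact ((hasDerivAt_id u).neg.exp).const_mul (α ^ 2)
  have step2 : ∫ t in Set.Ioc (0:ℝ) 1, g t
      = ∫ u in Set.Ici L, α ^ 2 * (u ^ m * Real.exp (-(α ^ 2 * Real.exp (-u))) * Real.exp (-u)) := by
    rw [← hexp_img, integral_image_eq_integral_abs_deriv_smul measurableSet_Ici
      (fun u hu => (hderiv u hu).hasDerivWithinAt) hexp_inj g]
    refine setIntegral_congr_fun measurableSet_Ici fun u _ => ?_
    have habs : |α ^ 2 * (Real.exp (-u) * -1)| = α ^ 2 * Real.exp (-u) := by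
      rw [abs_of_nonpos (by nlinarith [Real.exp_pos (-u)])]
      ring
    have hlog : Real.log (α ^ 2 / (α ^ 2 * Real.exp (-u))) = u := by
      rw [show α ^ 2 / (α ^ 2 * Real.exp (-u)) = (Real.exp (-u))⁻¹ by
        field_simp]
      rw [← Real.exp_neg, neg_neg, Real.log_exp]
    simp only [smul_eq_mul, habs, hg, hlog]
    ring
  -- Step 3: compare with the Gamma integral
  have hGammaInt : IntegrableOn (fun u : ℝ => α ^ 2 * (u ^ m * Real.exp (-u)))
      (Set.Ici (0:ℝ)) := by
    rw [integrableOn_Ici_iff_integrableOn_Ioi]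
    have h0 : IntegrableOn (fun x : ℝ => Real.exp (-x) * x ^ ((m:ℝ) + 1 - 1))
        (Set.Ioi (0:ℝ)) := Real.GammaIntegral_convergent (by positivity)
    have h1 : IntegrableOn (fun x : ℝ => Real.exp (-x) * x ^ m) (Set.Ioi (0:ℝ)) := by
      refine h0.congr_fun (fun x _ => ?_) measurableSet_Ioi
      dsimp only
      rw [show (m:ℝ) + 1 - 1 = (m:ℝ) by ring, Real.rpow_natCast]
    exact MeasureTheory.IntegrableOn.congr_fun (h1.const_mul (α ^ 2))
      (fun x _ => by ring) measurableSet_Ioi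
  have hnonneg : ∀ u : ℝ, 0 ≤ u → 0 ≤ α ^ 2 * (u ^ m * Real.exp (-u)) := fun u hu => by
    positivity
  have step3 : ∫ u in Set.Ici L,
        α ^ 2 * (u ^ m * Real.exp (-(α ^ 2 * Real.exp (-u))) * Real.exp (-u))
      ≤ ∫ u in Set.Ici L, α ^ 2 * (u ^ m * Real.exp (-u)) := by
    refine integral_mono_of_nonneg ?_ (hGammaInt.mono_set (Set.Ici_subset_Ici.2 hL0)) ?_
    · refine (ae_restrict_iff' measurableSet_Ici).2 (Filter.Eventually.of_forall fun u hu => ?_)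
      have hu0 : 0 ≤ u := le_trans hL0 hu
      positivity
    · refine (ae_restrict_iff' measurableSet_Ici).2 (Filter.Eventually.of_forall fun u hu => ?_)
      have hu0 : 0 ≤ u := le_trans hL0 hu
      have h1 : Real.exp (-(α ^ 2 * Real.exp (-u))) ≤ 1 := by
        rw [Real.exp_le_one_iff]
        nlinarith [Real.exp_pos (-u)]
      have h2 : (0:ℝ) ≤ u ^ m * Real.exp (-u) := by positivity
      calc α ^ 2 * (u ^ m * Real.exp (-(α ^ 2 * Real.exp (-u))) * Real.exp (-u))
          ≤ α ^ 2 * (u ^ m * 1 * Real.exp (-u)) := by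
            gcongr
        _ = α ^ 2 * (u ^ m * Real.exp (-u)) := by ring
  have step4 : ∫ u in Set.Ici L, α ^ 2 * (u ^ m * Real.exp (-u))
      ≤ ∫ u in Set.Ici (0:ℝ), α ^ 2 * (u ^ m * Real.exp (-u)) := by
    refine setIntegral_mono_set hGammaInt ?_ (HasSubset.Subset.eventuallyLE
      (Set.Ici_subset_Ici.2 hL0))
    exact (ae_restrict_iff' measurableSet_Ici).2
      (Filter.Eventually.of_forall fun u hu => hnonneg u hu)
  have hfinal : ∫ u in Set.Ici (0:ℝ), α ^ 2 * (u ^ m * Real.exp (-u))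
      = α ^ 2 * m.factorial := by
    rw [MeasureTheory.integral_Ici_eq_integral_Ioi, MeasureTheory.integral_const_mul]
    have : ∫ u in Set.Ioi (0:ℝ), u ^ m * Real.exp (-u) = Real.Gamma ((m:ℝ) + 1) := by
      rw [Real.Gamma_eq_integral (by positivity : (0:ℝ) < (m:ℝ) + 1)]
      refine setIntegral_congr_fun measurableSet_Ioi fun x _ => ?_
      rw [show (m:ℝ) + 1 - 1 = (m:ℝ) by ring, Real.rpow_natCast]
      ring
    rw [this, Real.Gamma_nat_eq_factorial]
  rw [← step1, step2]
  calc ∫ u in Set.Ici L,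
        α ^ 2 * (u ^ m * Real.exp (-(α ^ 2 * Real.exp (-u))) * Real.exp (-u))
      ≤ ∫ u in Set.Ici L, α ^ 2 * (u ^ m * Real.exp (-u)) := step3
    _ ≤ ∫ u in Set.Ici (0:ℝ), α ^ 2 * (u ^ m * Real.exp (-u)) := step4
    _ = α ^ 2 * m.factorial := hfinal
end

section
/- For every real number α ≥ 1 and every integer m ≥ 1, one has 2·∫_1^∞ ( log(α²ρ²) )^m · e^{−ρ²} · ρ dρ ≤ α² · m!. -/
open MeasureTheory

open Set Real in
private lemma sq_le_exp_aux (x : ℝ) (hx : 0 ≤ x) : x ^ 2 ≤ Real.exp x := by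
  have h1 : x / 4 + 1 ≤ Real.exp (x / 4) := Real.add_one_le_exp _
  have h2 : Real.exp (x / 4) * Real.exp (x / 4) = Real.exp (x / 2) := by
    rw [← Real.exp_add]; ring_nf
  have h3 : Real.exp (x / 2) * Real.exp (x / 2) = Real.exp x := by
    rw [← Real.exp_add]; ring_nf
  have hA : x ≤ Real.exp (x / 2) := by
    nlinarith [mul_le_mul h1 h1 (by linarith : (0:ℝ) ≤ x / 4 + 1) (Real.exp_pos (x / 4)).le,
      sq_nonneg (1 - x / 4)]
  calc x ^ 2 = x * x := sq x
    _ ≤ Real.exp (x / 2) * Real.exp (x / 2) := mul_self_le_mul_self hx hA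
    _ = Real.exp x := h3

set_option maxHeartbeats 1000000 in
open Set Real in
/-- For every real number α ≥ 1 and every integer m ≥ 1, one has
`2·∫_1^∞ (log(α²ρ²))^m · e^{−ρ²} · ρ dρ ≤ α² · m!`, the integral being the Lebesgue
integral over ρ ∈ [1,∞). -/
theorem log_moment_integral_le_outer (α : ℝ) (hα : 1 ≤ α) (m : ℕ) (hm : 1 ≤ m) :
    2 * ∫ ρ in Set.Ici (1 : ℝ),
        (Real.log (α ^ 2 * ρ ^ 2)) ^ m * Real.exp (-ρ ^ 2) * ρ
      ≤ α ^ 2 * m.factorial := by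
  have hα0 : (0 : ℝ) < α := lt_of_lt_of_le one_pos hα
  have hc1 : (1 : ℝ) ≤ α ^ 2 := one_le_pow₀ hα
  have hc0 : (0 : ℝ) < α ^ 2 := by positivity
  set f : ℝ → ℝ := fun ρ => (Real.log (α ^ 2 * ρ ^ 2)) ^ m * Real.exp (-ρ ^ 2) * ρ with hf
  set g : ℝ → ℝ := fun v => Real.exp (v / 2) / α with hgdef
  -- the derivative on Ici 0
  have hg' : ∀ v ∈ Ici (0 : ℝ),
      HasDerivWithinAt g (Real.exp (v / 2) / (2 * α)) (Ici 0) v := by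
    intro v _
    have : HasDerivAt g (Real.exp (v / 2) * (1 / 2) / α) v := by
      exact ((Real.hasDerivAt_exp (v / 2)).comp v ((hasDerivAt_id v).div_const 2)).div_const α
    have h2 : Real.exp (v / 2) * (1 / 2) / α = Real.exp (v / 2) / (2 * α) := by ring
    exact (h2 ▸ this).hasDerivWithinAt
  have hginj : Set.InjOn g (Ici (0 : ℝ)) := by
    intro a _ b _ hab
    simp only [hgdef, div_left_inj' hα0.ne', Real.exp_eq_exp] at hab
    linarith
  have himg : g '' Ici (0 : ℝ) = Ici (1 / α) := by
    ext ρ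
    constructor
    · rintro ⟨v, hv, rfl⟩
      have : (1 : ℝ) ≤ Real.exp (v / 2) := Real.one_le_exp (by linarith [mem_Ici.mp hv])
      simp only [hgdef, mem_Ici]
      gcongr
    · intro hρ
      have hρ0 : 0 < ρ := lt_of_lt_of_le (by positivity) hρ
      refine ⟨2 * Real.log (α * ρ), ?_, ?_⟩
      · have h1 : (1 : ℝ) ≤ α * ρ := by
          have := (div_le_iff₀ hα0).mp hρ
          nlinarith
        have := Real.log_nonneg h1
        simp only [mem_Ici]; linarith
      · simp only [hgdef]
        rw [show (2 : ℝ) * Real.log (α * ρ) / 2 = Real.log (α * ρ) by ring,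
          Real.exp_log (by positivity)]
        field_simp
  -- pointwise identity for the transformed integrand
  have heq : ∀ v : ℝ, |Real.exp (v / 2) / (2 * α)| • f (g v)
      = v ^ m * (Real.exp (-(Real.exp v / α ^ 2)) * Real.exp v / α ^ 2) / 2 := by
    intro v
    have hexp : Real.exp (v / 2) * Real.exp (v / 2) = Real.exp v := by
      rw [← Real.exp_add]; ring_nf
    have h2 : Real.exp (v / 2) ^ 2 = Real.exp v := by rw [sq]; exact hexp
    simp only [hf, hgdef, smul_eq_mul]
    rw [abs_of_nonneg (by positivity), div_pow, h2,
      show α ^ 2 * (Real.exp v / α ^ 2) = Real.exp v from by field_simp,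
      Real.log_exp, ← hexp]
    field_simp
  -- pointwise bound
  have hb : ∀ v : ℝ, Real.exp (-(Real.exp v / α ^ 2)) * Real.exp v / α ^ 2
      ≤ α ^ 2 * Real.exp (-v) := by
    intro v
    set x := Real.exp v / α ^ 2 with hxdef
    have hx : 0 < x := by positivity
    have h1 : x ^ 2 * Real.exp (-x) ≤ 1 := by
      calc x ^ 2 * Real.exp (-x) ≤ Real.exp x * Real.exp (-x) :=
            mul_le_mul_of_nonneg_right (sq_le_exp_aux x hx.le) (Real.exp_pos _).le
        _ = 1 := by rw [← Real.exp_add]; simp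
    have hev : Real.exp v = α ^ 2 * x := by rw [hxdef]; field_simp
    have key : Real.exp (-x) * x ≤ 1 / x := by
      rw [le_div_iff₀ hx]; nlinarith [h1]
    calc Real.exp (-x) * Real.exp v / α ^ 2 = Real.exp (-x) * x := by
          rw [hev]; field_simp
      _ ≤ 1 / x := key
      _ = α ^ 2 * Real.exp (-v) := by
          rw [Real.exp_neg, hev]; field_simp
  -- the dominating function and its integrability
  set D : ℝ → ℝ := fun v => α ^ 2 / 2 * (v ^ m * Real.exp (-v)) with hD
  have hfunext : (fun x : ℝ => Real.exp (-x) * x ^ ((m : ℝ) + 1 - 1))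
      = fun x : ℝ => x ^ m * Real.exp (-x) := by
    funext x
    rw [show (m : ℝ) + 1 - 1 = (m : ℝ) by ring, Real.rpow_natCast, mul_comm]
  have hint0 : IntegrableOn (fun x : ℝ => x ^ m * Real.exp (-x)) (Set.Ioi 0) := by
    rw [← hfunext]; exact Real.GammaIntegral_convergent (by positivity)
  have hint1 : IntegrableOn (fun x : ℝ => x ^ m * Real.exp (-x)) (Set.Ici 0) := by
    rwa [integrableOn_Ici_iff_integrableOn_Ioi]
  have hDint : IntegrableOn D (Set.Ici 0) := hint1.const_mul _
  -- value of the Gamma integral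
  have hIm : ∫ v in Set.Ici (0 : ℝ), v ^ m * Real.exp (-v) = m.factorial := by
    rw [MeasureTheory.integral_Ici_eq_integral_Ioi, ← hfunext,
      ← Real.Gamma_eq_integral (by positivity : (0:ℝ) < (m : ℝ) + 1),
      Real.Gamma_nat_eq_factorial]
  -- measurability of the transformed integrand
  have hgm : Measurable g := (Real.measurable_exp.comp (measurable_id.div_const 2)).div_const α
  have hfm : Measurable f := by
    simp only [hf]
    exact (((Real.measurable_log.comp ((measurable_id.pow_const 2).const_mul _)).pow_const m).mul
      (Real.measurable_exp.comp (measurable_id.pow_const 2).neg)).mul measurable_id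
  have hmeas : Measurable fun v : ℝ => |Real.exp (v / 2) / (2 * α)| • f (g v) := by
    simp only [smul_eq_mul]
    exact ((Real.measurable_exp.comp (measurable_id.div_const 2)).div_const _).abs.mul
      (hfm.comp hgm)
  -- nonnegativity and domination of the transformed integrand
  have hnn : ∀ v : ℝ, 0 ≤ v → 0 ≤ |Real.exp (v / 2) / (2 * α)| • f (g v) := by
    intro v hv
    rw [heq v]
    have hvm : 0 ≤ v ^ m := pow_nonneg hv m
    have : (0:ℝ) ≤ Real.exp (-(Real.exp v / α ^ 2)) * Real.exp v / α ^ 2 := by positivity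
    positivity
  have hle : ∀ v : ℝ, 0 ≤ v → |Real.exp (v / 2) / (2 * α)| • f (g v) ≤ D v := by
    intro v hv
    rw [heq v, hD]
    have hvm : 0 ≤ v ^ m := pow_nonneg hv m
    have := hb v
    nlinarith [this, hvm]
  -- integrability of f on Ici (1/α)
  have hInt : IntegrableOn f (Set.Ici (1 / α)) := by
    rw [← himg, integrableOn_image_iff_integrableOn_abs_deriv_smul measurableSet_Ici hg' hginj]
    refine hDint.mono' hmeas.aestronglyMeasurable ?_
    filter_upwards [ae_restrict_mem measurableSet_Ici] with v hv
    rw [Real.norm_eq_abs, abs_of_nonneg (hnn v hv)]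
    exact hle v hv
  -- nonnegativity of f on Ici (1/α)
  have hfnn : ∀ ρ ∈ Set.Ici (1 / α), 0 ≤ f ρ := by
    intro ρ hρ
    have hρ0 : 0 < ρ := lt_of_lt_of_le (by positivity) hρ
    have h1 : (1:ℝ) ≤ α ^ 2 * ρ ^ 2 := by
      have h2 : 1 / α ≤ ρ := hρ
      have h3 : 1 ≤ α * ρ := by
        rw [div_le_iff₀ hα0] at h2; linarith [mul_comm ρ α]
      nlinarith
    exact mul_nonneg (mul_nonneg (pow_nonneg (Real.log_nonneg h1) m)
      (Real.exp_pos _).le) hρ0.le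
  have hsub : Set.Ici (1:ℝ) ⊆ Set.Ici (1 / α) :=
    Set.Ici_subset_Ici.mpr (by rw [div_le_one hα0]; exact hα)
  have hcv : ∫ ρ in Set.Ici (1 / α), f ρ
      = ∫ v in Set.Ici (0:ℝ), |Real.exp (v / 2) / (2 * α)| • f (g v) := by
    rw [← himg]
    exact integral_image_eq_integral_abs_deriv_smul measurableSet_Ici hg' hginj f
  calc 2 * ∫ ρ in Set.Ici (1:ℝ), f ρ
      ≤ 2 * ∫ ρ in Set.Ici (1 / α), f ρ := by
        refine mul_le_mul_of_nonneg_left ?_ (by norm_num)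
        refine setIntegral_mono_set hInt ?_ (HasSubset.Subset.eventuallyLE hsub)
        filter_upwards [ae_restrict_mem measurableSet_Ici] with ρ hρ
        exact hfnn ρ hρ
    _ = 2 * ∫ v in Set.Ici (0:ℝ), |Real.exp (v / 2) / (2 * α)| • f (g v) := by rw [hcv]
    _ ≤ 2 * ∫ v in Set.Ici (0:ℝ), D v := by
        refine mul_le_mul_of_nonneg_left ?_ (by norm_num)
        refine integral_mono_of_nonneg ?_ hDint ?_
        · filter_upwards [ae_restrict_mem measurableSet_Ici] with v hv
          exact hnn v hv
        · filter_upwards [ae_restrict_mem measurableSet_Ici] with v hv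
          exact hle v hv
    _ = α ^ 2 * ∫ v in Set.Ici (0:ℝ), v ^ m * Real.exp (-v) := by
        rw [hD, MeasureTheory.integral_const_mul]; ring
    _ = α ^ 2 * m.factorial := by rw [hIm]
end

section
/- For every real number r with 0 < r ≤ 1, one has (1/2π)·∫_0^{2π} log( cos²θ + r²·sin²θ ) dθ = 2·log((1+r)/2). -/
open Complex Real MeasureTheory intervalIntegral

lemma abs_one_add_pos {a : ℝ} (ha0 : 0 ≤ a) (ha1 : a < 1) (z : ℂ) (hz : ‖z‖ ≤ 1) :
    0 < (1 + (a:ℂ) * z).re := by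
  have h1 : |((a:ℂ) * z).re| ≤ ‖(a:ℂ) * z‖ := Complex.abs_re_le_norm _
  have h2 : ‖(a:ℂ)*z‖ ≤ a := by
    rw [norm_mul, Complex.norm_of_nonneg ha0]
    nlinarith
  have h3 : -a ≤ ((a:ℂ)*z).re := by
    have := abs_le.1 (h1.trans h2); linarith [this.1]
  simp only [Complex.add_re, Complex.one_re]
  linarith

lemma mean_log_abs {a : ℝ} (ha0 : 0 ≤ a) (ha1 : a < 1) :
    ∫ θ in (0:ℝ)..(2*π), Real.log (‖1 + (a:ℂ) * Complex.exp (θ * Complex.I)‖) = 0 := by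
  set f : ℂ → ℂ := fun z => Complex.log (1 + (a:ℂ) * z) with hf
  have hdiff : ∀ z ∈ Metric.closedBall (0:ℂ) 1, DifferentiableAt ℂ f z := by
    intro z hz
    have hre : 0 < (1 + (a:ℂ) * z).re :=
      abs_one_add_pos ha0 ha1 z (by simpa [Metric.mem_closedBall, Complex.dist_eq] using hz)
    have h1 : DifferentiableAt ℂ (fun z : ℂ => 1 + (a:ℂ) * z) z := by fun_prop
    exact (Complex.differentiableAt_log (Or.inl hre)).comp z h1
  have key : (∮ z in C((0:ℂ), 1), (z - 0)⁻¹ • f z) = (2 * π * Complex.I : ℂ) • f 0 :=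
    Complex.circleIntegral_sub_center_inv_smul_of_differentiable_on_off_countable one_pos
      Set.countable_empty
      (fun z hz => (hdiff z hz).continuousAt.continuousWithinAt)
      (fun z hz => hdiff z (Metric.ball_subset_closedBall hz.1))
  have hf0 : f 0 = 0 := by simp [hf]
  rw [hf0, smul_zero] at key
  rw [circleIntegral] at key
  simp only [deriv_circleMap, circleMap_zero, sub_zero, one_mul, smul_eq_mul,
    Complex.ofReal_one] at key
  have key2 : ∫ θ in (0:ℝ)..(2*π), f (Complex.exp (θ * Complex.I)) = 0 := by
    have heq : ∀ θ : ℝ, (Complex.exp (θ * Complex.I) * Complex.I) *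
        ((Complex.exp (θ * Complex.I))⁻¹ * f (Complex.exp (θ * Complex.I)))
        = Complex.I * f (Complex.exp (θ * Complex.I)) := by
      intro θ
      have hne : Complex.exp (θ * Complex.I) ≠ 0 := Complex.exp_ne_zero _
      field_simp
    simp only [heq] at key
    rw [intervalIntegral.integral_const_mul] at key
    simpa [Complex.I_ne_zero] using key
  have hcont : Continuous fun θ : ℝ => f (Complex.exp (θ * Complex.I)) := by
    rw [continuous_iff_continuousAt]
    intro θ
    have hz : Complex.exp ((θ:ℂ) * Complex.I) ∈ Metric.closedBall (0:ℂ) 1 := by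
      simp [Metric.mem_closedBall, Complex.dist_eq, Complex.norm_exp]
    have h5 : ContinuousAt (fun θ : ℝ => Complex.exp ((θ:ℂ) * Complex.I)) θ :=
      (by fun_prop : Continuous fun θ : ℝ => Complex.exp ((θ:ℂ) * Complex.I)).continuousAt
    exact ContinuousAt.comp (f := fun θ : ℝ => Complex.exp ((θ:ℂ) * Complex.I)) (x := θ) ((hdiff _ hz).continuousAt) h5
  have h4 := congrArg Complex.re key2
  rw [← Complex.reCLM_apply, ← Complex.reCLM.intervalIntegral_comp_comm (hcont.intervalIntegrable _ _)] at h4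
  simp only [hf, Complex.reCLM_apply, Complex.log_re, Complex.zero_re] at h4
  exact h4

/-- For every real number r with 0 < r ≤ 1,
`(1/2π)·∫_0^{2π} log(cos²θ + r²·sin²θ) dθ = 2·log((1+r)/2)`. -/
theorem jensen_circle_integral (r : ℝ) (hr0 : 0 < r) (hr1 : r ≤ 1) :
    (1 / (2 * Real.pi)) *
        ∫ θ in (0 : ℝ)..(2 * Real.pi),
          Real.log (Real.cos θ ^ 2 + r ^ 2 * Real.sin θ ^ 2)
      = 2 * Real.log ((1 + r) / 2) := by
  have hr1p : (0:ℝ) < 1 + r := by linarith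
  have hb : (0:ℝ) < (1 + r) / 2 := by linarith
  set a : ℝ := (1 - r) / (1 + r) with ha
  have ha0 : 0 ≤ a := div_nonneg (by linarith) hr1p.le
  have ha1 : a < 1 := by rw [ha, div_lt_one hr1p]; linarith
  set g : ℝ → ℝ := fun φ => Real.log (‖1 + (a:ℝ) * Complex.exp (φ * Complex.I)‖)
    with hg
  have habs : ∀ φ : ℝ, 1 - a ≤ ‖1 + (a:ℝ) * Complex.exp (φ * Complex.I)‖ := by
    intro φ
    have h1 : ‖(a:ℂ) * Complex.exp (φ * Complex.I)‖ = a := by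
      rw [norm_mul, Complex.norm_of_nonneg ha0, Complex.norm_exp]
      simp
    have h2 := norm_sub_norm_le (1:ℂ) (-((a:ℂ) * Complex.exp (φ * Complex.I)))
    simp only [sub_neg_eq_add, norm_neg, norm_one] at h2
    rw [h1] at h2
    exact h2
  have hpos : ∀ φ : ℝ, 0 < ‖1 + (a:ℝ) * Complex.exp (φ * Complex.I)‖ :=
    fun φ => lt_of_lt_of_le (by linarith) (habs φ)
  have hgcont : Continuous g := by
    rw [continuous_iff_continuousAt]
    intro φ
    have hc2 : ContinuousAt (fun φ : ℝ =>
        ‖1 + (a:ℝ) * Complex.exp (φ * Complex.I)‖) φ :=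
      (continuous_norm.comp (by fun_prop)).continuousAt
    exact ContinuousAt.comp (x := φ)
      (f := fun φ : ℝ => ‖1 + (a:ℝ) * Complex.exp (φ * Complex.I)‖)
      (Real.continuousAt_log (ne_of_gt (hpos φ))) hc2
  have hpt : ∀ θ : ℝ, Real.log (Real.cos θ ^ 2 + r ^ 2 * Real.sin θ ^ 2)
      = 2 * Real.log ((1 + r) / 2) + 2 * g (2 * θ) := by
    intro θ
    have hA2 : (‖1 + (a:ℝ) * Complex.exp ((2*θ:ℝ) * Complex.I)‖)^2
        = 1 + 2 * a * Real.cos (2*θ) + a^2 := by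
      rw [Complex.sq_norm, Complex.normSq_apply]
      simp only [Complex.add_re, Complex.add_im, Complex.one_re, Complex.one_im,
        Complex.mul_re, Complex.mul_im, Complex.ofReal_re, Complex.ofReal_im,
        Complex.exp_ofReal_mul_I_re, Complex.exp_ofReal_mul_I_im]
      linear_combination (a^2) * Real.sin_sq_add_cos_sq (2*θ)
    have hs := Real.sin_sq_add_cos_sq θ
    have heq : Real.cos θ ^ 2 + r ^ 2 * Real.sin θ ^ 2
        = ((1 + r)/2)^2 * (‖1 + (a:ℝ) * Complex.exp ((2*θ:ℝ) * Complex.I)‖)^2 := by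
      rw [hA2, Real.cos_two_mul, ha]
      field_simp
      linear_combination (4*r^2) * hs
    rw [heq, Real.log_mul (pow_ne_zero 2 hb.ne') (pow_ne_zero 2 (hpos _).ne'),
      Real.log_pow, Real.log_pow]
    simp only [hg, Nat.cast_ofNat]
  rw [intervalIntegral.integral_congr (g := fun θ =>
      2 * Real.log ((1 + r) / 2) + 2 * g (2 * θ)) (fun θ _ => hpt θ)]
  have hint1 : IntervalIntegrable (fun θ : ℝ => 2 * g (2*θ)) volume 0 (2*π) :=
    (continuous_const.mul (hgcont.comp (continuous_const.mul continuous_id))).intervalIntegrable _ _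
  rw [intervalIntegral.integral_add (intervalIntegrable_const) hint1,
    intervalIntegral.integral_const, intervalIntegral.integral_const_mul]
  have hsub : ∫ θ in (0:ℝ)..(2*π), g (2*θ) = 0 := by
    have h1 : ∫ θ in (0:ℝ)..(2*π), g (2*θ) = (2:ℝ)⁻¹ • ∫ φ in (2*(0:ℝ))..(2*(2*π)), g φ :=
      intervalIntegral.integral_comp_mul_left g (by norm_num)
    have hper : Function.Periodic g (2*π) := by
      intro φ
      simp only [hg]
      congr 2
      push_cast
      rw [add_mul, Complex.exp_add]
      simp [Complex.exp_two_pi_mul_I]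
    have h2 : ∫ φ in (2*π)..(2*π+2*π), g φ = ∫ φ in (0:ℝ)..(0+2*π), g φ :=
      hper.intervalIntegral_add_eq (2*π) 0
    have h0 : ∫ φ in (0:ℝ)..(2*π), g φ = 0 := mean_log_abs ha0 ha1
    have htot : ∫ φ in (2*(0:ℝ))..(2*(2*π)), g φ = 0 := by
      have e1 : (2*(0:ℝ)) = 0 := by norm_num
      have e2 : (2*(2*π):ℝ) = 2*π + 2*π := by ring
      rw [e1, e2, ← intervalIntegral.integral_add_adjacent_intervals
        (hgcont.intervalIntegrable 0 (2*π)) (hgcont.intervalIntegrable (2*π) (2*π+2*π)), h2]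
      rw [zero_add] at h2 ⊢
      rw [h0]
      simp [h0]
    rw [h1, htot, smul_zero]
  rw [hsub]
  have hπ : Real.pi ≠ 0 := Real.pi_ne_zero
  field_simp
  simp only [smul_eq_mul, sub_zero, mul_zero, add_zero]
  ring
end

section
/- For every k ≥ 1 and every z ∈ ℂ^{k+1} ∖ {0}, there exist an orthogonal matrix A ∈ O(k+1, ℝ) (acting ℂ-linearly on ℂ^{k+1} by extension of scalars), a scalar λ ∈ ℂ ∖ {0}, and a real number r ∈ [0,1], such that A·z = λ·(e_0 + i·r·e_1), where e_0, e_1 are the first two standard basis vectors; moreover, for such r one has |z_0² + ⋯ + z_k²|/|z|² = (1−r²)/(1+r²). -/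
open Matrix
open scoped RealInnerProductSpace

lemma aux_ortho_matrix {n : ℕ} (hn : 1 ≤ n) (x y : EuclideanSpace ℝ (Fin (n + 1)))
    (hxy : ⟪x, y⟫ = 0) (hx : x ≠ 0) :
    ∃ A : Matrix (Fin (n + 1)) (Fin (n + 1)) ℝ, Aᵀ * A = 1 ∧
      (A.mulVec x = fun i => if i = 0 then ‖x‖ else 0) ∧
      (A.mulVec y = fun i => if i = 1 then ‖y‖ else 0) := by
  classical
  have h01 : (0 : Fin (n + 1)) ≠ 1 := by
    have : (1 : ℕ) < n + 1 := by omega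
    simp [Fin.ext_iff, Nat.mod_eq_of_lt this]
  have hcard : Module.finrank ℝ (EuclideanSpace ℝ (Fin (n + 1))) = Fintype.card (Fin (n + 1)) := by
    simp
  have hxn : ‖x‖ ≠ 0 := norm_ne_zero_iff.mpr hx
  have hxx : ⟪‖x‖⁻¹ • x, ‖x‖⁻¹ • x⟫ = 1 := by
    rw [real_inner_smul_left, real_inner_smul_right, real_inner_self_eq_norm_mul_norm]
    field_simp
  obtain ⟨b, hb0, hb1⟩ : ∃ b : OrthonormalBasis (Fin (n + 1)) ℝ (EuclideanSpace ℝ (Fin (n + 1))),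
      x = ‖x‖ • b 0 ∧ y = ‖y‖ • b 1 := by
    by_cases hy : y = 0
    · have horth : Orthonormal ℝ (Set.restrict {0} (fun _ : Fin (n + 1) => ‖x‖⁻¹ • x)) := by
        rw [orthonormal_iff_ite]
        rintro ⟨i, hi⟩ ⟨j, hj⟩
        simp only [Set.mem_singleton_iff] at hi hj
        subst hi; subst hj
        dsimp only [Set.restrict]
        simpa using hxx
      obtain ⟨b, hb⟩ := horth.exists_orthonormalBasis_extension_of_card_eq hcard
      refine ⟨b, ?_, by simp [hy]⟩
      rw [hb 0 rfl, smul_smul]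
      field_simp
      rw [one_smul]
    · have hyn : ‖y‖ ≠ 0 := norm_ne_zero_iff.mpr hy
      have hyy : ⟪‖y‖⁻¹ • y, ‖y‖⁻¹ • y⟫ = 1 := by
        rw [real_inner_smul_left, real_inner_smul_right, real_inner_self_eq_norm_mul_norm]
        field_simp
      have hxy' : ⟪‖x‖⁻¹ • x, ‖y‖⁻¹ • y⟫ = 0 := by
        rw [real_inner_smul_left, real_inner_smul_right, hxy]; ring
      have hyx' : ⟪‖y‖⁻¹ • y, ‖x‖⁻¹ • x⟫ = 0 := by
        rw [real_inner_smul_left, real_inner_smul_right, real_inner_comm, hxy]; ring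
      set v : Fin (n + 1) → EuclideanSpace ℝ (Fin (n + 1)) :=
        fun i => if i = 0 then ‖x‖⁻¹ • x else ‖y‖⁻¹ • y with hv
      have horth : Orthonormal ℝ (Set.restrict {0, 1} v) := by
        rw [orthonormal_iff_ite]
        rintro ⟨i, hi⟩ ⟨j, hj⟩
        simp only [Set.mem_insert_iff, Set.mem_singleton_iff] at hi hj
        simp at hxx hyy
        rcases hi with rfl | rfl <;> rcases hj with rfl | rfl <;>
          simp [hv, h01, h01.symm, hxx, hyy, hxy', hyx', Set.restrict]
      obtain ⟨b, hb⟩ := horth.exists_orthonormalBasis_extension_of_card_eq hcard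
      have hb0 : b 0 = ‖x‖⁻¹ • x := by rw [hb 0 (by simp)]; simp [hv]
      have hb1 : b 1 = ‖y‖⁻¹ • y := by rw [hb 1 (by simp)]; simp [hv, h01.symm]
      refine ⟨b, ?_, ?_⟩
      · rw [hb0, smul_smul]; field_simp; rw [one_smul]
      · rw [hb1, smul_smul]; field_simp; rw [one_smul]
  set A : Matrix (Fin (n + 1)) (Fin (n + 1)) ℝ := Matrix.of fun i j => b i j with hA
  have hinner : ∀ u : EuclideanSpace ℝ (Fin (n + 1)), ∀ i, A.mulVec u i = ⟪b i, u⟫ := by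
    intro u i
    simp [hA, Matrix.mulVec, dotProduct, PiLp.inner_apply, RCLike.inner_apply, mul_comm]
  have hbo := orthonormal_iff_ite.mp b.orthonormal
  refine ⟨A, ?_, ?_, ?_⟩
  · rw [mul_eq_one_comm]
    ext i j
    have : (A * Aᵀ) i j = ⟪b i, b j⟫ := by
      simp [hA, Matrix.mul_apply, Matrix.transpose_apply, PiLp.inner_apply, RCLike.inner_apply, mul_comm]
    rw [this, hbo i j]
    simp [Matrix.one_apply]
  · funext i
    rw [hinner]
    have : ⟪b i, x⟫ = ‖x‖ * ⟪b i, b 0⟫ := by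
      conv_lhs => rw [hb0]
      rw [real_inner_smul_right]
    rw [this, hbo]
    by_cases h : i = 0 <;> simp [h]
  · funext i
    rw [hinner]
    have : ⟪b i, y⟫ = ‖y‖ * ⟪b i, b 1⟫ := by
      conv_lhs => rw [hb1]
      rw [real_inner_smul_right]
    rw [this, hbo]
    by_cases h : i = 1 <;> simp [h]


/-- A slice for the action of the real orthogonal group on `ℂP^k`: every nonzero
`z ∈ ℂ^{k+1}` can be mapped, by a real orthogonal matrix `A` acting `ℂ`-linearly and up to a
nonzero complex scalar `λ`, to `e₀ + i·r·e₁` for some `r ∈ [0,1]`; moreover for such `r`,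
`|z_0² + ⋯ + z_k²|/|z|² = (1−r²)/(1+r²)`. -/
theorem orthogonal_slice (k : ℕ) (hk : 1 ≤ k) (z : Fin (k + 1) → ℂ) (hz : z ≠ 0) :
    ∃ (A : Matrix (Fin (k + 1)) (Fin (k + 1)) ℝ) (lam : ℂ) (r : ℝ),
      Aᵀ * A = 1 ∧ lam ≠ 0 ∧ 0 ≤ r ∧ r ≤ 1 ∧
      ((A.map fun t => (t : ℂ)).mulVec z =
        fun i => lam * (if i = 0 then 1 else if i = 1 then Complex.I * r else 0)) ∧
      ‖∑ i, z i ^ 2‖ / (∑ i, ‖z i‖ ^ 2)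
        = (1 - r ^ 2) / (1 + r ^ 2) := by
  classical
  set Q : ℂ := ∑ i, z i ^ 2 with hQdef
  set μ : ℂ := Complex.exp (-(Q.arg : ℂ) * Complex.I / 2) with hμdef
  have hμ : μ ≠ 0 := Complex.exp_ne_zero _
  have hμabs : ‖μ‖ = 1 := by
    rw [hμdef]
    rw [Complex.norm_exp]
    norm_num
  have hμ2 : μ ^ 2 * Q = ((‖Q‖ : ℝ) : ℂ) := by
    have h1 : μ ^ 2 = Complex.exp (-(Q.arg : ℂ) * Complex.I) := by
      rw [hμdef, pow_two, ← Complex.exp_add]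
      congr 1
      ring
    calc μ ^ 2 * Q
        = Complex.exp (-(Q.arg : ℂ) * Complex.I)
            * (((‖Q‖ : ℝ) : ℂ) * Complex.exp ((Q.arg : ℂ) * Complex.I)) := by
          rw [h1, Complex.norm_mul_exp_arg_mul_I]
      _ = ((‖Q‖ : ℝ) : ℂ)
            * Complex.exp (-(Q.arg : ℂ) * Complex.I + (Q.arg : ℂ) * Complex.I) := by
          rw [Complex.exp_add]; ring
      _ = ((‖Q‖ : ℝ) : ℂ) := by
          rw [neg_mul, neg_add_cancel, Complex.exp_zero, mul_one]
  set x : EuclideanSpace ℝ (Fin (k + 1)) := WithLp.toLp 2 (fun i => (μ * z i).re) with hxdef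
  set y : EuclideanSpace ℝ (Fin (k + 1)) := WithLp.toLp 2 (fun i => (μ * z i).im) with hydef
  have hw : ∀ i, μ * z i = (x i : ℂ) + (y i : ℂ) * Complex.I := fun i =>
    (Complex.re_add_im (μ * z i)).symm
  have hsum : ∑ i, (μ * z i) ^ 2 = ((‖Q‖ : ℝ) : ℂ) := by
    rw [← hμ2, hQdef, Finset.mul_sum]
    congr 1; funext i; ring
  set X : ℝ := ∑ i, x i ^ 2 with hXdef
  set Y : ℝ := ∑ i, y i ^ 2 with hYdef
  have hre : X - Y = ‖Q‖ := by
    have h := congrArg Complex.re hsum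
    rw [Complex.re_sum] at h
    have h2 : ∑ i, ((μ * z i) ^ 2).re = ∑ i, (x i ^ 2 - y i ^ 2) :=
      Finset.sum_congr rfl fun i _ => by
        rw [pow_two, Complex.mul_re]
        simp only [hxdef, hydef, PiLp.toLp_apply]
        ring
    rw [h2, Finset.sum_sub_distrib] at h
    simpa using h
  have him : ∑ i, x i * y i = 0 := by
    have := congrArg Complex.im hsum
    simp [Complex.im_sum, pow_two, Complex.mul_im] at this
    have h2 : ∑ i, (x i * y i + y i * x i) = 0 := by
      simpa [hxdef, hydef, Complex.mul_re, Complex.mul_im] using this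
    have h3 : ∑ i, (x i * y i + y i * x i) = 2 * ∑ i, x i * y i := by
      rw [Finset.mul_sum]; congr 1; funext i; ring
    linarith [h3 ▸ h2]
  have habs : ∀ i, ‖z i‖ ^ 2 = x i ^ 2 + y i ^ 2 := by
    intro i
    have : ‖z i‖ = ‖μ * z i‖ := by
      rw [norm_mul, hμabs, one_mul]
    rw [this, Complex.sq_norm, Complex.normSq_apply]
    simp [hxdef, hydef, pow_two]
  have hXY : ∑ i, ‖z i‖ ^ 2 = X + Y := by
    rw [hXdef, hYdef, ← Finset.sum_add_distrib]
    exact Finset.sum_congr rfl fun i _ => habs i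
  have hXYpos : 0 < X + Y := by
    rw [← hXY]
    obtain ⟨i, hi⟩ := Function.ne_iff.mp hz
    have h1 : 0 < ‖z i‖ ^ 2 := pow_pos (norm_pos_iff.mpr hi) 2
    have h2 : ∀ j ∈ Finset.univ, 0 ≤ ‖z j‖ ^ 2 := fun j _ => by positivity
    exact Finset.sum_pos' h2 ⟨i, Finset.mem_univ i, h1⟩
  have hYX : Y ≤ X := by
    have : (0 : ℝ) ≤ ‖Q‖ := norm_nonneg Q
    linarith [hre]
  have hXpos : 0 < X := by linarith
  have hx0 : x ≠ 0 := by
    intro h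
    have : X = 0 := by
      rw [hXdef]
      apply Finset.sum_eq_zero
      intro i _
      have : x i = 0 := by simp [h]
      simp [this]
    linarith
  have hxy : ⟪x, y⟫ = 0 := by
    rw [PiLp.inner_apply]
    simpa [RCLike.inner_apply, mul_comm] using him
  obtain ⟨A, hA1, hAx, hAy⟩ := aux_ortho_matrix hk x y hxy hx0
  have hnx : ‖x‖ = Real.sqrt X := by
    rw [EuclideanSpace.norm_eq]
    congr 1
    exact Finset.sum_congr rfl fun i _ => by rw [Real.norm_eq_abs, sq_abs]
  have hny : ‖y‖ = Real.sqrt Y := by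
    rw [EuclideanSpace.norm_eq]
    congr 1
    exact Finset.sum_congr rfl fun i _ => by rw [Real.norm_eq_abs, sq_abs]
  have hnx2 : ‖x‖ ^ 2 = X := by rw [hnx, Real.sq_sqrt hXpos.le]
  have hny2 : ‖y‖ ^ 2 = Y := by
    rw [hny, Real.sq_sqrt]
    rw [hYdef]; positivity
  have hnxpos : 0 < ‖x‖ := by
    rw [hnx]; exact Real.sqrt_pos.mpr hXpos
  refine ⟨A, μ⁻¹ * ‖x‖, ‖y‖ / ‖x‖, hA1, ?_, by positivity, ?_, ?_, ?_⟩
  · exact mul_ne_zero (inv_ne_zero hμ) (by exact_mod_cast hnxpos.ne')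
  · rw [div_le_one hnxpos]
    have := Real.sqrt_le_sqrt hYX
    rw [← hnx, ← hny] at this
    exact this
  · funext i
    have hmv : ∀ i, ∑ j, A i j * x j = if i = 0 then ‖x‖ else 0 := fun i => congrFun hAx i
    have hmvy : ∀ i, ∑ j, A i j * y j = if i = 1 then ‖y‖ else 0 := fun i => congrFun hAy i
    have step1 : ((A.map fun t => (t : ℂ)).mulVec z) i
        = ∑ j, ((A i j : ℂ) * (x j : ℂ) + (A i j : ℂ) * (y j : ℂ) * Complex.I) * μ⁻¹ := by
      rw [Matrix.mulVec, dotProduct]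
      refine Finset.sum_congr rfl fun j _ => ?_
      rw [Matrix.map_apply]
      have hzj : z j = μ⁻¹ * (μ * z j) := by field_simp
      rw [hzj, hw j]
      ring
    have step2 : ∑ j, ((A i j : ℂ) * (x j : ℂ) + (A i j : ℂ) * (y j : ℂ) * Complex.I)
        = ((∑ j, A i j * x j : ℝ) : ℂ) + ((∑ j, A i j * y j : ℝ) : ℂ) * Complex.I := by
      push_cast
      rw [Finset.sum_add_distrib, Finset.sum_mul]
    have lhs_eq : ((A.map fun t => (t : ℂ)).mulVec z) i
        = μ⁻¹ * (((∑ j, A i j * x j : ℝ) : ℂ) + ((∑ j, A i j * y j : ℝ) : ℂ) * Complex.I) := by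
      rw [step1, ← Finset.sum_mul, step2, mul_comm]
    rw [lhs_eq, hmv, hmvy]
    rcases eq_or_ne i 0 with rfl | h0
    · have h01 : (0 : Fin (k + 1)) ≠ 1 := by
        have : (1 : ℕ) < k + 1 := by omega
        simp [Fin.ext_iff, Nat.mod_eq_of_lt this]
      simp [h01]
    · rcases eq_or_ne i 1 with rfl | h1
      · have h10 : (1 : Fin (k + 1)) ≠ 0 := by
          have : (1 : ℕ) < k + 1 := by omega
          simp [Fin.ext_iff, Nat.mod_eq_of_lt this]
        simp only [if_neg h10, if_pos rfl]
        have hcx : ((‖x‖ : ℝ) : ℂ) ≠ 0 := by exact_mod_cast hnxpos.ne'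
        push_cast
        field_simp
        ring
      · simp [h0, h1]
  · rw [hXY, ← hre]
    have hr2 : (‖y‖ / ‖x‖) ^ 2 = Y / X := by
      rw [div_pow, hnx2, hny2]
    rw [hr2]
    rw [div_eq_div_iff (by linarith) (by positivity)]
    field_simp
end

section
/- For every z ∈ ℂ with Im z > 0, one has ∫_{ℝ²} log(|a_0 + a_1·z|²) · (e^{−(a_0²+a_1²)}/π) da_0 da_1 = ∫_0^∞ e^{−t} log t dt + log( |z + i|² / 4 ). -/
open MeasureTheory Set

lemma aux_re_pos {w u : ℂ} (hw : ‖w‖ < 1) (hu : ‖u‖ ≤ 1) :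
    0 < (1 + u * w).re := by
  have h1 : ‖u * w‖ < 1 := by
    rw [norm_mul]
    calc ‖u‖ * ‖w‖ ≤ 1 * ‖w‖ :=
          mul_le_mul_of_nonneg_right hu (norm_nonneg w)
      _ < 1 := by simpa using hw
  have h2 := Complex.abs_re_le_norm (u * w)
  have h3 : (1 + u * w).re = 1 + (u * w).re := by simp
  have h4 := abs_lt.mp (h2.trans_lt h1)
  rw [h3]; linarith [h4.1]

lemma circle_log_avg {w : ℂ} (hw : ‖w‖ < 1) :
    ∫ θ in (0:ℝ)..(2*Real.pi),
      Real.log (‖1 + Complex.exp ((θ:ℂ) * Complex.I) * w‖) = 0 := by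
  set f : ℂ → ℂ := fun ζ => Complex.log (1 + ζ * w) with hf
  have hmem : ∀ ζ : ℂ, ‖ζ‖ ≤ 1 → (1 + ζ * w) ∈ Complex.slitPlane :=
    fun ζ hζ => Or.inl (aux_re_pos hw hζ)
  have hd : DifferentiableOn ℂ f (Metric.closedBall 0 1) := by
    intro ζ hζ
    refine DifferentiableAt.differentiableWithinAt ?_
    refine DifferentiableAt.clog ?_ ?_
    · exact (differentiable_const _).add ((differentiable_id).mul (differentiable_const _)) |>.differentiableAt
    · exact hmem ζ (by simpa [Metric.mem_closedBall, Complex.dist_eq] using hζ)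
  have hc : DiffContOnCl ℂ f (Metric.ball 0 1) := by
    apply DifferentiableOn.diffContOnCl
    rwa [closure_ball (0:ℂ) one_ne_zero]
  have key := hc.circleIntegral_sub_inv_smul (Metric.mem_ball_self one_pos)
  have hf0 : f 0 = 0 := by simp [hf]
  rw [hf0, smul_zero] at key
  rw [circleIntegral] at key
  have hsimp : ∀ θ : ℝ,
      (deriv (circleMap 0 1) θ) • ((circleMap 0 1 θ - 0)⁻¹ • f (circleMap 0 1 θ))
        = Complex.I * f (circleMap 0 1 θ) := by
    intro θ
    have hne : circleMap 0 1 θ ≠ 0 := circleMap_ne_center one_ne_zero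
    rw [deriv_circleMap]
    simp only [smul_eq_mul, sub_zero]
    field_simp
  rw [intervalIntegral.integral_congr (fun θ _ => hsimp θ)] at key
  rw [intervalIntegral.integral_const_mul] at key
  have hI : (∫ θ in (0:ℝ)..(2*Real.pi), f (circleMap 0 1 θ)) = 0 := by
    rcases mul_eq_zero.mp key with h | h
    · exact absurd h Complex.I_ne_zero
    · exact h
  -- take real parts
  have hcont : Continuous fun θ : ℝ => f (circleMap 0 1 θ) := by
    apply Continuous.clog
    · exact continuous_const.add ((continuous_circleMap 0 1).mul continuous_const)
    · intro θ
      exact hmem _ (by simp [circleMap, Complex.norm_exp])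
  have h2π : (0:ℝ) ≤ 2 * Real.pi := by positivity
  have hre : (∫ θ in (0:ℝ)..(2*Real.pi), f (circleMap 0 1 θ)).re
      = ∫ θ in (0:ℝ)..(2*Real.pi), (f (circleMap 0 1 θ)).re := by
    rw [intervalIntegral.integral_of_le h2π, intervalIntegral.integral_of_le h2π]
    exact (integral_re (hcont.integrableOn_Ioc)).symm
  have : (∫ θ in (0:ℝ)..(2*Real.pi), (f (circleMap 0 1 θ)).re) = 0 := by
    rw [← hre, hI, Complex.zero_re]
  refine Eq.trans ?_ this
  apply intervalIntegral.integral_congr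
  intro θ _
  simp only [hf, Complex.log_re, circleMap, Complex.ofReal_one, one_mul, zero_add]

lemma circle_log_avg2 {w : ℂ} (hw : ‖w‖ < 1) :
    ∫ θ in Set.Ioo (-Real.pi) Real.pi,
      Real.log (‖1 + Complex.exp ((((-2:ℝ) * θ : ℝ) : ℂ) * Complex.I) * w‖) = 0 := by
  set g : ℝ → ℝ := fun s => Real.log (‖1 + Complex.exp ((s:ℂ) * Complex.I) * w‖)
    with hg
  have hne : ∀ s : ℝ, ‖1 + Complex.exp ((s:ℂ) * Complex.I) * w‖ ≠ 0 := by
    intro s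
    have h := aux_re_pos hw (u := Complex.exp ((s:ℂ) * Complex.I)) (le_of_eq (by
      rw [Complex.norm_exp]; simp))
    intro h0
    rw [norm_eq_zero] at h0
    rw [h0] at h; simp at h
  have hinner : Continuous fun s : ℝ => ‖1 + Complex.exp ((s:ℂ) * Complex.I) * w‖ :=
    continuous_norm.comp (continuous_const.add ((Complex.continuous_exp.comp
      (Complex.continuous_ofReal.mul continuous_const)).mul continuous_const))
  have hgc : Continuous g := hinner.log hne
  have hgint : ∀ a b : ℝ, IntervalIntegrable g volume a b := fun a b => hgc.intervalIntegrable a b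
  have hper : Function.Periodic g (2 * Real.pi) := by
    intro s
    simp only [hg]
    congr 3
    rw [show ((s + 2*Real.pi : ℝ) : ℂ) * Complex.I
        = (s:ℂ) * Complex.I + 2 * (Real.pi:ℂ) * Complex.I by push_cast; ring,
      Complex.exp_add, Complex.exp_two_pi_mul_I, mul_one]
  have hpi : (0:ℝ) < Real.pi := Real.pi_pos
  have h1 : ∫ θ in Set.Ioo (-Real.pi) Real.pi,
      Real.log (‖1 + Complex.exp ((((-2:ℝ) * θ : ℝ) : ℂ) * Complex.I) * w‖)
      = ∫ θ in (-Real.pi)..Real.pi, g ((-2) * θ) := by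
    rw [intervalIntegral.integral_of_le (by linarith), integral_Ioc_eq_integral_Ioo]
  rw [h1, intervalIntegral.integral_comp_mul_left g (by norm_num : (-2:ℝ) ≠ 0)]
  have h2 : (∫ x in ((-2:ℝ) * -Real.pi)..((-2:ℝ) * Real.pi), g x)
      = - ∫ x in (-(2*Real.pi))..(2*Real.pi), g x := by
    rw [← intervalIntegral.integral_symm]
    norm_num
  have h3 : (∫ x in (-(2*Real.pi))..(2*Real.pi), g x)
      = (∫ x in (-(2*Real.pi))..(0:ℝ), g x) + ∫ x in (0:ℝ)..(2*Real.pi), g x :=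
    (intervalIntegral.integral_add_adjacent_intervals (hgint _ _) (hgint _ _)).symm
  have h4 : (∫ x in (-(2*Real.pi))..(0:ℝ), g x) = ∫ x in (0:ℝ)..(2*Real.pi), g x := by
    have := hper.intervalIntegral_add_eq (-(2*Real.pi)) 0
    simpa using this
  have h5 : (∫ x in (0:ℝ)..(2*Real.pi), g x) = 0 := circle_log_avg hw
  rw [h2, h3, h4, h5]
  norm_num

lemma aux_den_ne (z : ℂ) (hz : 0 < z.im) : (1 : ℂ) - Complex.I * z ≠ 0 := by
  intro h
  have h1 : Complex.I * z = 1 := by linear_combination -h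
  have h2 : z = -Complex.I := by
    have := congrArg (fun t => -Complex.I * t) h1
    rw [show -Complex.I * (Complex.I * z) = -(Complex.I * Complex.I) * z by ring,
      Complex.I_mul_I] at this
    simpa using this
  rw [h2] at hz
  simp at hz
  linarith

lemma aux_w_lt (z : ℂ) (hz : 0 < z.im) :
    ‖(1 + Complex.I * z) / (1 - Complex.I * z)‖ < 1 := by
  have hden := aux_den_ne z hz
  rw [norm_div, div_lt_one (norm_pos_iff.mpr hden)]
  have hsq : Complex.normSq (1 + Complex.I * z) < Complex.normSq (1 - Complex.I * z) := by
    simp only [Complex.normSq_apply, Complex.add_re, Complex.add_im, Complex.sub_re,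
      Complex.sub_im, Complex.one_re, Complex.one_im, Complex.mul_re, Complex.mul_im,
      Complex.I_re, Complex.I_im]
    nlinarith [hz]
  rw [Complex.norm_def, Complex.norm_def]
  exact Real.sqrt_lt_sqrt (Complex.normSq_nonneg _) hsq

lemma aux_abs_den (z : ℂ) : ‖1 - Complex.I * z‖ = ‖z + Complex.I‖ := by
  have h : Complex.I * (1 - Complex.I * z) = z + Complex.I := by
    have := Complex.I_mul_I
    linear_combination (-z) * Complex.I_mul_I
  calc ‖1 - Complex.I * z‖
      = ‖Complex.I‖ * ‖1 - Complex.I * z‖ := by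
        rw [Complex.norm_I, one_mul]
    _ = ‖Complex.I * (1 - Complex.I * z)‖ := (norm_mul _ _).symm
    _ = ‖z + Complex.I‖ := by rw [h]

lemma aux_factor (z : ℂ) (hz : 0 < z.im) (θ : ℝ) :
    ((Real.cos θ : ℂ) + (Real.sin θ : ℂ) * z)
      = Complex.exp ((θ:ℂ) * Complex.I) * ((1 - Complex.I * z) / 2)
        * (1 + Complex.exp ((((-2:ℝ) * θ : ℝ) : ℂ) * Complex.I)
            * ((1 + Complex.I * z) / (1 - Complex.I * z))) := by
  have hden := aux_den_ne z hz
  set C : ℂ := (Real.cos θ : ℂ) with hC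
  set S : ℂ := (Real.sin θ : ℂ) with hS
  have htrig : C ^ 2 + S ^ 2 = 1 := by
    rw [hC, hS]
    norm_cast
    exact_mod_cast Real.cos_sq_add_sin_sq θ
  set E : ℂ := Complex.exp ((θ:ℂ) * Complex.I) with hEdef
  have hEne : E ≠ 0 := Complex.exp_ne_zero _
  have hE : E = C + S * Complex.I := by
    rw [hEdef, Complex.exp_mul_I, hC, hS, Complex.ofReal_cos, Complex.ofReal_sin]
  have hEinv : E⁻¹ = C - S * Complex.I := by
    refine inv_eq_of_mul_eq_one_right ?_
    rw [hE]
    linear_combination htrig - S^2 * Complex.I_sq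
  have hE2 : Complex.exp ((((-2:ℝ) * θ : ℝ) : ℂ) * Complex.I) = E⁻¹ * E⁻¹ := by
    rw [hEdef, ← Complex.exp_neg, ← Complex.exp_add]
    congr 1
    push_cast
    ring
  have step1 : ∀ u : ℂ, u ≠ 0 →
      u * ((1 - Complex.I * z) / 2) * (1 + (u⁻¹ * u⁻¹)
        * ((1 + Complex.I * z) / (1 - Complex.I * z)))
      = u * ((1 - Complex.I * z) / 2) + u⁻¹ * ((1 + Complex.I * z) / 2) := by
    intro u hu
    field_simp
  rw [hE2, step1 E hEne, hEinv, hE]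
  linear_combination (S * z) * Complex.I_sq

lemma theta_integrand_eq (z : ℂ) (hz : 0 < z.im) (θ : ℝ) :
    Real.log (‖(Real.cos θ : ℂ) + (Real.sin θ : ℂ) * z‖ ^ 2)
      = Real.log (‖z + Complex.I‖ ^ 2 / 4)
        + 2 * Real.log (‖1 + Complex.exp ((((-2:ℝ) * θ : ℝ) : ℂ) * Complex.I)
            * ((1 + Complex.I * z) / (1 - Complex.I * z))‖) := by
  set w : ℂ := (1 + Complex.I * z) / (1 - Complex.I * z) with hwdef
  have hw := aux_w_lt z hz
  have habsE : ‖Complex.exp ((θ:ℂ) * Complex.I)‖ = 1 := by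
    rw [Complex.norm_exp]; simp
  have habsE2 : ‖Complex.exp ((((-2:ℝ) * θ : ℝ) : ℂ) * Complex.I)‖ = 1 := by
    rw [Complex.norm_exp]; simp
  have hupos : 0 < ‖1 + Complex.exp ((((-2:ℝ) * θ : ℝ) : ℂ) * Complex.I) * w‖ := by
    have h := aux_re_pos hw (le_of_eq habsE2)
    have : (1 + Complex.exp ((((-2:ℝ) * θ : ℝ) : ℂ) * Complex.I) * w) ≠ 0 := by
      intro h0; rw [h0] at h; simp at h
    exact norm_pos_iff.mpr this
  have hzI : 0 < ‖z + Complex.I‖ := by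
    rw [← aux_abs_den z]
    exact norm_pos_iff.mpr (aux_den_ne z hz)
  have habs : ‖(Real.cos θ : ℂ) + (Real.sin θ : ℂ) * z‖
      = ‖z + Complex.I‖ / 2
        * ‖1 + Complex.exp ((((-2:ℝ) * θ : ℝ) : ℂ) * Complex.I) * w‖ := by
    rw [aux_factor z hz θ, norm_mul, norm_mul, habsE, one_mul, norm_div, aux_abs_den z]
    norm_num
    exact Or.inl rfl
  rw [habs]
  rw [mul_pow, Real.log_mul (by positivity) (by positivity), div_pow]
  rw [Real.log_pow]
  norm_num

lemma theta_integral (z : ℂ) (hz : 0 < z.im) :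
    ∫ θ in Set.Ioo (-Real.pi) Real.pi,
        Real.log (‖(Real.cos θ : ℂ) + (Real.sin θ : ℂ) * z‖ ^ 2)
      = 2 * Real.pi * Real.log (‖z + Complex.I‖ ^ 2 / 4) := by
  set w : ℂ := (1 + Complex.I * z) / (1 - Complex.I * z) with hwdef
  have hw := aux_w_lt z hz
  have hpi := Real.pi_pos
  have hrw : ∀ θ ∈ Set.Ioo (-Real.pi) Real.pi,
      Real.log (‖(Real.cos θ : ℂ) + (Real.sin θ : ℂ) * z‖ ^ 2)
      = Real.log (‖z + Complex.I‖ ^ 2 / 4)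
        + 2 * Real.log (‖1 + Complex.exp ((((-2:ℝ) * θ : ℝ) : ℂ) * Complex.I) * w‖) :=
    fun θ _ => theta_integrand_eq z hz θ
  rw [setIntegral_congr_fun measurableSet_Ioo hrw]
  -- integrability of the second summand
  have hne : ∀ s : ℝ, ‖1 + Complex.exp ((s:ℂ) * Complex.I) * w‖ ≠ 0 := by
    intro s
    have h := aux_re_pos hw (u := Complex.exp ((s:ℂ) * Complex.I)) (le_of_eq (by
      rw [Complex.norm_exp]; simp))
    intro h0
    rw [norm_eq_zero] at h0
    rw [h0] at h; simp at h
  have hcont : Continuous fun θ : ℝ =>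
      Real.log (‖1 + Complex.exp ((((-2:ℝ) * θ : ℝ) : ℂ) * Complex.I) * w‖) := by
    have hinner : Continuous fun θ : ℝ =>
        ‖1 + Complex.exp ((((-2:ℝ) * θ : ℝ):ℂ) * Complex.I) * w‖ := by
      refine continuous_norm.comp ?_
      refine continuous_const.add ((Complex.continuous_exp.comp ?_).mul continuous_const)
      exact (Complex.continuous_ofReal.comp (continuous_const.mul continuous_id)).mul
        continuous_const
    exact hinner.log fun θ => hne ((-2) * θ)
  have hint2 : IntegrableOn (fun θ : ℝ =>
      2 * Real.log (‖1 + Complex.exp ((((-2:ℝ) * θ : ℝ) : ℂ) * Complex.I) * w‖))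
      (Set.Ioo (-Real.pi) Real.pi) := by
    exact ((continuous_const.mul hcont).integrableOn_Icc).mono_set Set.Ioo_subset_Icc_self
  have hint1 : IntegrableOn (fun _ : ℝ => Real.log (‖z + Complex.I‖ ^ 2 / 4))
      (Set.Ioo (-Real.pi) Real.pi) := integrableOn_const (by
        rw [Real.volume_Ioo]; exact ENNReal.ofReal_ne_top)
  rw [integral_add hint1 hint2]
  have hv : (volume (Set.Ioo (-Real.pi) Real.pi)).toReal = 2 * Real.pi := by
    rw [Real.volume_Ioo, ENNReal.toReal_ofReal (by linarith)]
    ring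
  rw [setIntegral_const, measureReal_def, hv, integral_const_mul, circle_log_avg2 hw]
  simp [smul_eq_mul]

lemma sq_image_Ioi : (fun r : ℝ => r ^ 2) '' Set.Ioi 0 = Set.Ioi 0 := by
  ext t
  constructor
  · rintro ⟨r, hr, rfl⟩
    exact pow_pos (show (0:ℝ) < r from hr) 2
  · intro ht
    exact ⟨Real.sqrt t, Real.sqrt_pos.2 ht, Real.sq_sqrt ht.le⟩

lemma sq_injOn : Set.InjOn (fun r : ℝ => r ^ 2) (Set.Ioi 0) := by
  intro a ha b hb h
  simp only [Set.mem_Ioi] at ha hb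
  simp only at h
  rw [← Real.sqrt_sq ha.le, ← Real.sqrt_sq hb.le, h]

lemma sq_hasDeriv : ∀ x ∈ Set.Ioi (0:ℝ),
    HasDerivWithinAt (fun r : ℝ => r ^ 2) (2 * x) (Set.Ioi 0) x := by
  intro x _
  simpa using (hasDerivAt_pow 2 x).hasDerivWithinAt

lemma radial_subst :
    (∫ t in Set.Ioi (0:ℝ), Real.exp (-t) * Real.log t)
      = ∫ r in Set.Ioi (0:ℝ), |2 * r| • (Real.exp (-(r ^ 2)) * Real.log (r ^ 2)) := by
  have h := integral_image_eq_integral_abs_deriv_smul measurableSet_Ioi sq_hasDeriv sq_injOn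
    fun t => Real.exp (-t) * Real.log t
  rwa [sq_image_Ioi] at h

lemma exp_log_integrable : IntegrableOn (fun t : ℝ => Real.exp (-t) * Real.log t)
    (Set.Ioi (0:ℝ)) := by
  have hmeas : AEStronglyMeasurable (fun t : ℝ => Real.exp (-t) * Real.log t)
      (volume.restrict (Set.Ioi (0:ℝ))) := by
    refine ((Real.continuous_exp.comp continuous_neg).aestronglyMeasurable.mul ?_)
    exact Real.measurable_log.aestronglyMeasurable
  rw [show Set.Ioi (0:ℝ) = Set.Ioc 0 1 ∪ Set.Ioi 1 by
    rw [Set.Ioc_union_Ioi_eq_Ioi]; norm_num]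
  apply IntegrableOn.union
  · -- on (0,1]: dominate by 2 * t ^ (-1/2)
    have hmaj : IntegrableOn (fun t : ℝ => 2 * t ^ (-(1:ℝ)/2)) (Set.Ioc (0:ℝ) 1) := by
      have h := (intervalIntegral.intervalIntegrable_rpow' (a := 0) (b := 1) (r := -(1:ℝ)/2)
        (by norm_num)).const_mul 2
      rw [intervalIntegrable_iff_integrableOn_Ioc_of_le (by norm_num : (0:ℝ) ≤ 1)] at h
      exact h
    refine Integrable.mono' hmaj (hmeas.mono_set ?_) ?_
    · exact fun t ht => Set.mem_Ioi.mpr ht.1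
    · filter_upwards [ae_restrict_mem measurableSet_Ioc] with t ht
      have ht0 : 0 < t := ht.1
      have ht1 : t ≤ 1 := ht.2
      have hlog : |Real.log t| = Real.log t⁻¹ := by
        rw [Real.log_inv, abs_of_nonpos (Real.log_nonpos ht0.le ht1)]
      have hb : Real.log t⁻¹ ≤ (t⁻¹) ^ ((1:ℝ)/2) / ((1:ℝ)/2) :=
        Real.log_le_rpow_div (by positivity) (by norm_num)
      have hrw : (t⁻¹) ^ ((1:ℝ)/2) / ((1:ℝ)/2) = 2 * t ^ (-(1:ℝ)/2) := by
        rw [show (t⁻¹) ^ ((1:ℝ)/2) = t ^ (-(1:ℝ)/2) by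
          rw [Real.inv_rpow ht0.le, ← Real.rpow_neg ht0.le]; norm_num]
        ring
      rw [Real.norm_eq_abs, abs_mul, Real.abs_exp]
      calc Real.exp (-t) * |Real.log t| ≤ 1 * |Real.log t| := by
            apply mul_le_mul_of_nonneg_right _ (abs_nonneg _)
            exact Real.exp_le_one_iff.mpr (by linarith)
        _ = Real.log t⁻¹ := by rw [one_mul, hlog]
        _ ≤ 2 * t ^ (-(1:ℝ)/2) := hb.trans_eq hrw
  · -- on (1, ∞): dominate by exp(-t) * t
    have hmaj : IntegrableOn (fun t : ℝ => Real.exp (-t) * t ^ ((2:ℝ) - 1)) (Set.Ioi (1:ℝ)) :=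
      (Real.GammaIntegral_convergent (by norm_num : (0:ℝ) < 2)).mono_set
        (Set.Ioi_subset_Ioi (by norm_num))
    refine Integrable.mono' hmaj (hmeas.mono_set (Set.Ioi_subset_Ioi (by norm_num))) ?_
    filter_upwards [ae_restrict_mem measurableSet_Ioi] with t ht
    have ht1 : 1 < t := ht
    have hlog : |Real.log t| = Real.log t := abs_of_nonneg (Real.log_nonneg ht1.le)
    rw [Real.norm_eq_abs, abs_mul, Real.abs_exp, hlog]
    have : Real.log t ≤ t ^ ((2:ℝ) - 1) := by
      rw [show ((2:ℝ) - 1) = 1 by norm_num, Real.rpow_one]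
      have := Real.log_le_sub_one_of_pos (by linarith : (0:ℝ) < t)
      linarith
    exact mul_le_mul_of_nonneg_left this (Real.exp_nonneg _)

lemma radial_integrable : IntegrableOn
    (fun r : ℝ => r * Real.exp (-(r ^ 2)) * Real.log (r ^ 2)) (Set.Ioi (0:ℝ)) := by
  have h := (integrableOn_image_iff_integrableOn_abs_deriv_smul measurableSet_Ioi
    sq_hasDeriv sq_injOn (fun t => Real.exp (-t) * Real.log t)).mp
    (by rw [sq_image_Ioi]; exact exp_log_integrable)
  have h2 : IntegrableOn (fun r : ℝ => 1/2 * (|2 * r| • (Real.exp (-(r ^ 2)) * Real.log (r ^ 2))))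
      (Set.Ioi (0:ℝ)) := h.const_mul _
  refine IntegrableOn.congr_fun h2 ?_ measurableSet_Ioi
  intro r hr
  have hr0 : (0:ℝ) < r := hr
  simp only [smul_eq_mul]
  rw [abs_of_nonneg (by linarith : (0:ℝ) ≤ 2 * r)]
  ring

lemma gauss_radial_integrable : IntegrableOn (fun r : ℝ => r * Real.exp (-(r ^ 2)))
    (Set.Ioi (0:ℝ)) := by
  have h := integrable_mul_exp_neg_mul_sq (b := 1) one_pos
  refine (h.integrableOn).congr_fun (fun r _ => by norm_num) measurableSet_Ioi

lemma gauss_radial_value : ∫ r in Set.Ioi (0:ℝ), r * Real.exp (-(r ^ 2)) = 1/2 := by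
  have hderiv : ∀ x ∈ Set.Ici (0:ℝ),
      HasDerivAt (fun r : ℝ => -Real.exp (-(r ^ 2)) / 2) (x * Real.exp (-(x ^ 2))) x := by
    intro x _
    have h1 : HasDerivAt (fun r : ℝ => -(r ^ 2)) (-(2 * x)) x := by
      simpa using ((hasDerivAt_pow 2 x).fun_neg)
    have h2 := (Real.hasDerivAt_exp (-(x ^ 2))).comp x h1
    have h3 := (h2.fun_neg).div_const 2
    exact h3.congr_deriv (by ring)
  have htend : Filter.Tendsto (fun r : ℝ => -Real.exp (-(r ^ 2)) / 2) Filter.atTop (nhds 0) := by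
    have h1 : Filter.Tendsto (fun r : ℝ => -(r ^ 2)) Filter.atTop Filter.atBot :=
      Filter.tendsto_neg_atBot_iff.mpr (Filter.tendsto_pow_atTop two_ne_zero)
    have h2 : Filter.Tendsto (fun r : ℝ => Real.exp (-(r ^ 2))) Filter.atTop (nhds 0) :=
      Real.tendsto_exp_atBot.comp h1
    have h3 := (h2.neg).div_const 2
    simpa using h3
  have h := integral_Ioi_of_hasDerivAt_of_tendsto' hderiv gauss_radial_integrable htend
  rw [h]
  norm_num

lemma c_ne_zero (z : ℂ) (hz : 0 < z.im) (θ : ℝ) :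
    ((Real.cos θ : ℂ) + (Real.sin θ : ℂ) * z) ≠ 0 := by
  intro h
  have him := congrArg Complex.im h
  have hre := congrArg Complex.re h
  simp only [Complex.add_im, Complex.ofReal_im, Complex.mul_im, Complex.ofReal_re,
    Complex.zero_im, Complex.add_re, Complex.mul_re, Complex.zero_re] at him hre
  have hsin : Real.sin θ = 0 := by
    by_contra hs
    have him2 : Real.sin θ * z.im = 0 := by linarith
    rcases mul_eq_zero.mp him2 with h1 | h1
    · exact hs h1
    · linarith
  have hcos : Real.cos θ = 0 := by
    rw [hsin] at hre
    simpa using hre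
  have := Real.sin_sq_add_cos_sq θ
  rw [hsin, hcos] at this
  norm_num at this

lemma L_integrable (z : ℂ) (hz : 0 < z.im) : IntegrableOn
    (fun θ : ℝ => Real.log (‖(Real.cos θ : ℂ) + (Real.sin θ : ℂ) * z‖ ^ 2))
    (Set.Ioo (-Real.pi) Real.pi) := by
  have hcont : Continuous fun θ : ℝ =>
      Real.log (‖(Real.cos θ : ℂ) + (Real.sin θ : ℂ) * z‖ ^ 2) := by
    have hinner : Continuous fun θ : ℝ =>
        ‖(Real.cos θ : ℂ) + (Real.sin θ : ℂ) * z‖ ^ 2 := by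
      refine (continuous_norm.comp ?_).pow 2
      exact (Complex.continuous_ofReal.comp Real.continuous_cos).add
        ((Complex.continuous_ofReal.comp Real.continuous_sin).mul continuous_const)
    refine hinner.log fun θ => ?_
    exact pow_ne_zero 2 (norm_ne_zero_iff.mpr (c_ne_zero z hz θ))
  exact hcont.integrableOn_Icc.mono_set Set.Ioo_subset_Icc_self

/-- For `z` in the upper half-plane, the expectation, for a standard Gaussian vector
`(a_0, a_1)` on `ℝ²`, of `log |a_0 + a_1 z|²` equals
`∫_0^∞ e^{−t} log t dt + log(|z + i|²/4)`. -/
theorem gaussian_log_linear_form (z : ℂ) (hz : 0 < z.im) :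
    ∫ a : ℝ × ℝ,
        Real.log (‖(a.1 : ℂ) + (a.2 : ℂ) * z‖ ^ 2) *
          (Real.exp (-(a.1 ^ 2 + a.2 ^ 2)) / Real.pi)
      = (∫ t in Set.Ioi (0 : ℝ), Real.exp (-t) * Real.log t) +
        Real.log (‖z + Complex.I‖ ^ 2 / 4) := by
  have hpi := Real.pi_pos
  set F : ℝ × ℝ → ℝ := fun a =>
    Real.log (‖(a.1 : ℂ) + (a.2 : ℂ) * z‖ ^ 2) *
      (Real.exp (-(a.1 ^ 2 + a.2 ^ 2)) / Real.pi) with hF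
  rw [← integral_comp_polarCoord_symm F, polarCoord_target]
  have pointwise : ∀ p ∈ (Set.Ioi (0:ℝ)) ×ˢ (Set.Ioo (-Real.pi) Real.pi),
      p.1 • F (polarCoord.symm p)
        = (p.1 * Real.exp (-(p.1 ^ 2)) * Real.log (p.1 ^ 2) / Real.pi) * (1:ℝ)
          + (p.1 * Real.exp (-(p.1 ^ 2)) / Real.pi) *
            Real.log (‖(Real.cos p.2 : ℂ) + (Real.sin p.2 : ℂ) * z‖ ^ 2) := by
    rintro ⟨r, θ⟩ ⟨hr, -⟩
    have hr0 : (0:ℝ) < r := hr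
    rw [polarCoord_symm_apply]
    simp only [hF, smul_eq_mul]
    have hcast : ((r * Real.cos θ : ℝ) : ℂ) + ((r * Real.sin θ : ℝ) : ℂ) * z
        = (r:ℂ) * ((Real.cos θ : ℂ) + (Real.sin θ : ℂ) * z) := by push_cast; ring
    rw [hcast, norm_mul, mul_pow, Complex.norm_real, Real.norm_eq_abs, abs_of_pos hr0]
    have hexp : -((r * Real.cos θ) ^ 2 + (r * Real.sin θ) ^ 2) = -(r ^ 2) := by
      have h := Real.sin_sq_add_cos_sq θ
      nlinarith [h]
    rw [hexp]
    rw [Real.log_mul (pow_ne_zero 2 hr0.ne') (pow_ne_zero 2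
      (norm_ne_zero_iff.mpr (c_ne_zero z hz θ)))]
    ring
  rw [setIntegral_congr_fun (measurableSet_Ioi.prod measurableSet_Ioo) pointwise]
  have hprod : (volume : Measure (ℝ × ℝ)).restrict
        ((Set.Ioi (0:ℝ)) ×ˢ (Set.Ioo (-Real.pi) Real.pi))
      = (volume.restrict (Set.Ioi (0:ℝ))).prod (volume.restrict (Set.Ioo (-Real.pi) Real.pi)) := by
    rw [Measure.volume_eq_prod, Measure.prod_restrict]
  have hIoo_fin : volume (Set.Ioo (-Real.pi) Real.pi) < ⊤ := by
    rw [Real.volume_Ioo]; exact ENNReal.ofReal_lt_top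
  have hI1 : IntegrableOn (fun p : ℝ × ℝ =>
      (p.1 * Real.exp (-(p.1 ^ 2)) * Real.log (p.1 ^ 2) / Real.pi) * (1:ℝ))
      ((Set.Ioi (0:ℝ)) ×ˢ (Set.Ioo (-Real.pi) Real.pi)) := by
    rw [IntegrableOn, hprod]
    exact Integrable.mul_prod (radial_integrable.div_const Real.pi)
      (integrableOn_const hIoo_fin.ne)
  have hI2 : IntegrableOn (fun p : ℝ × ℝ =>
      (p.1 * Real.exp (-(p.1 ^ 2)) / Real.pi) *
        Real.log (‖(Real.cos p.2 : ℂ) + (Real.sin p.2 : ℂ) * z‖ ^ 2))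
      ((Set.Ioi (0:ℝ)) ×ˢ (Set.Ioo (-Real.pi) Real.pi)) := by
    rw [IntegrableOn, hprod]
    exact Integrable.mul_prod (gauss_radial_integrable.div_const Real.pi) (L_integrable z hz)
  rw [integral_add hI1 hI2]
  rw [show (volume : Measure (ℝ × ℝ)) = volume.prod volume from Measure.volume_eq_prod ℝ ℝ]
  have e1 := setIntegral_prod_mul (μ := (volume : Measure ℝ)) (ν := (volume : Measure ℝ))
    (fun r : ℝ => r * Real.exp (-(r ^ 2)) * Real.log (r ^ 2) / Real.pi)
    (fun _ : ℝ => (1:ℝ)) (Set.Ioi 0) (Set.Ioo (-Real.pi) Real.pi)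
  have e2 := setIntegral_prod_mul (μ := (volume : Measure ℝ)) (ν := (volume : Measure ℝ))
    (fun r : ℝ => r * Real.exp (-(r ^ 2)) / Real.pi)
    (fun θ : ℝ => Real.log (‖(Real.cos θ : ℂ) + (Real.sin θ : ℂ) * z‖ ^ 2))
    (Set.Ioi 0) (Set.Ioo (-Real.pi) Real.pi)
  rw [e1, e2]
  have hB : (∫ _ in Set.Ioo (-Real.pi) Real.pi, (1:ℝ)) = 2 * Real.pi := by
    rw [setIntegral_const, measureReal_def, Real.volume_Ioo, smul_eq_mul, mul_one,
      ENNReal.toReal_ofReal (by linarith)]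
    ring
  have hsub : (∫ r in Set.Ioi (0:ℝ), |2 * r| • (Real.exp (-(r ^ 2)) * Real.log (r ^ 2)))
      = 2 * ∫ r in Set.Ioi (0:ℝ), r * Real.exp (-(r ^ 2)) * Real.log (r ^ 2) := by
    rw [← integral_const_mul]
    apply setIntegral_congr_fun measurableSet_Ioi
    intro r hr
    have hr0 : (0:ℝ) < r := hr
    simp only [smul_eq_mul]
    rw [abs_of_nonneg (by linarith : (0:ℝ) ≤ 2 * r)]
    ring
  have hA : (∫ r in Set.Ioi (0:ℝ), r * Real.exp (-(r ^ 2)) * Real.log (r ^ 2) / Real.pi)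
      = (∫ t in Set.Ioi (0:ℝ), Real.exp (-t) * Real.log t) / (2 * Real.pi) := by
    rw [integral_div, radial_subst, hsub]
    field_simp
  have hC : (∫ r in Set.Ioi (0:ℝ), r * Real.exp (-(r ^ 2)) / Real.pi)
      = 1 / (2 * Real.pi) := by
    rw [integral_div, gauss_radial_value]
    field_simp
  rw [hA, hB, hC, theta_integral z hz]
  field_simp
end
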